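/- Let n ≥ 1 be an integer and let α, β > 0. Then ∫_{ℝⁿ} |γ_{n,α}(x) − γ_{n,β}(x)| dx ≤ C √n |β/α − 1|, where C > 0 is a universal constant. -/

import Mathlib

open MeasureTheory Real Set Filter
open scoped ENNReal NNReal

noncomputable section

/-- The gaussian density `γ_{n,v}(x) = (2πv)^{−n/2} exp(−|x|²/(2v))` on ℝⁿ. -/
def gaussDensity (n : ℕ) (v : ℝ) (x : EuclideanSpace ℝ (Fin n)) : ℝ :=
  (2 * π * v) ^ (-(n : ℝ) / 2) * Real.exp (-‖x‖ ^ 2 / (2 * v))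

namespace GaussAux

lemma aux_integrable {n : ℕ} {b : ℝ} (hb : 0 < b) :
    Integrable (fun x : EuclideanSpace ℝ (Fin n) => Real.exp (-b * ‖x‖ ^ 2)) := by
  have h := (GaussianFourier.integrable_cexp_neg_mul_sq_norm_add
    (V := EuclideanSpace ℝ (Fin n)) (b := (b : ℂ)) (by simpa using hb) 0 0).norm
  refine h.congr ?_
  filter_upwards with x
  rw [Complex.norm_exp]
  norm_num
  left
  rw [← Complex.ofReal_pow, Complex.ofReal_re]

lemma aux_integral {n : ℕ} {b : ℝ} (hb : 0 < b) :
    ∫ x : EuclideanSpace ℝ (Fin n), Real.exp (-b * ‖x‖ ^ 2) = (π / b) ^ ((n : ℝ) / 2) := by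
  rw [GaussianFourier.integral_rexp_neg_mul_sq_norm hb]
  simp

lemma gd_pos {n : ℕ} {v : ℝ} (hv : 0 < v) (x : EuclideanSpace ℝ (Fin n)) :
    0 < gaussDensity n v x := by
  unfold gaussDensity
  have := Real.pi_pos
  positivity

lemma gd_eq {n : ℕ} {v : ℝ} (x : EuclideanSpace ℝ (Fin n)) :
    gaussDensity n v x = (2 * π * v) ^ (-(n : ℝ) / 2) * Real.exp (-(1 / (2 * v)) * ‖x‖ ^ 2) := by
  have h : -‖x‖ ^ 2 / (2 * v) = -(1 / (2 * v)) * ‖x‖ ^ 2 := by ring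
  rw [gaussDensity, h]

lemma gd_continuous {n : ℕ} (v : ℝ) :
    Continuous (fun x : EuclideanSpace ℝ (Fin n) => gaussDensity n v x) := by
  unfold gaussDensity
  fun_prop

lemma gd_integrable {n : ℕ} {v : ℝ} (hv : 0 < v) :
    Integrable (fun x : EuclideanSpace ℝ (Fin n) => gaussDensity n v x) := by
  have h := (aux_integrable (n := n) (b := 1 / (2 * v)) (by positivity)).const_mul
    ((2 * π * v) ^ (-(n : ℝ) / 2))
  refine h.congr ?_
  filter_upwards with x
  rw [gd_eq]

lemma gd_integral {n : ℕ} {v : ℝ} (hv : 0 < v) :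
    ∫ x : EuclideanSpace ℝ (Fin n), gaussDensity n v x = 1 := by
  have hπ := Real.pi_pos
  have h2πv : (0 : ℝ) < 2 * π * v := by positivity
  simp_rw [gd_eq]
  rw [integral_const_mul, aux_integral (by positivity : (0:ℝ) < 1 / (2 * v))]
  have hπv : π / (1 / (2 * v)) = 2 * π * v := by
    field_simp
  rw [hπv, ← Real.rpow_add h2πv, show -(n : ℝ) / 2 + (n : ℝ) / 2 = 0 by ring, Real.rpow_zero]

lemma ratio_eq {n : ℕ} {α β : ℝ} (hα : 0 < α) (hβ : 0 < β)
    (x : EuclideanSpace ℝ (Fin n)) :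
    gaussDensity n β x ^ 2 / gaussDensity n α x
      = ((2 * π * β) ^ (-(n : ℝ)) * (2 * π * α) ^ ((n : ℝ) / 2))
        * Real.exp (-((2 * α - β) / (2 * α * β)) * ‖x‖ ^ 2) := by
  have hπ := Real.pi_pos
  have hβp : (0 : ℝ) < 2 * π * β := by positivity
  have hαp : (0 : ℝ) < 2 * π * α := by positivity
  rw [gaussDensity, gaussDensity, mul_pow, mul_div_mul_comm]
  congr 1
  · rw [← Real.rpow_natCast ((2 * π * β) ^ (-(n : ℝ) / 2)) 2, ← Real.rpow_mul hβp.le,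
      div_eq_mul_inv, ← Real.rpow_neg hαp.le]
    congr 1
    · congr 1
      push_cast
      ring
    · congr 1
      ring
  · rw [sq, ← Real.exp_add, ← Real.exp_sub]
    congr 1
    field_simp
    ring

lemma ratio_integrable {n : ℕ} {α β : ℝ} (hα : 0 < α) (hβ : 0 < β) (h2 : β < 2 * α) :
    Integrable (fun x : EuclideanSpace ℝ (Fin n) =>
      gaussDensity n β x ^ 2 / gaussDensity n α x) := by
  have hb : (0 : ℝ) < (2 * α - β) / (2 * α * β) := by
    apply div_pos <;> [linarith; positivity]
  have h := (aux_integrable (n := n) hb).const_mul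
    ((2 * π * β) ^ (-(n : ℝ)) * (2 * π * α) ^ ((n : ℝ) / 2))
  refine h.congr ?_
  filter_upwards with x
  rw [ratio_eq hα hβ]

lemma ratio_integral {n : ℕ} {α β : ℝ} (hα : 0 < α) (hβ : 0 < β) (h2 : β < 2 * α) :
    ∫ x : EuclideanSpace ℝ (Fin n), gaussDensity n β x ^ 2 / gaussDensity n α x
      = ((1 - (β / α - 1) ^ 2)⁻¹) ^ ((n : ℝ) / 2) := by
  have hπ := Real.pi_pos
  have hβp : (0 : ℝ) < 2 * π * β := by positivity
  have hαp : (0 : ℝ) < 2 * π * α := by positivity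
  have hb : (0 : ℝ) < (2 * α - β) / (2 * α * β) := by
    apply div_pos <;> [linarith; positivity]
  simp_rw [ratio_eq hα hβ]
  rw [integral_const_mul, aux_integral hb]
  rw [show -(n : ℝ) = (-2) * ((n : ℝ) / 2) by ring, Real.rpow_mul hβp.le]
  rw [← Real.mul_rpow (by positivity) (by positivity),
    ← Real.mul_rpow (by positivity) (by positivity)]
  congr 1
  have h1 : (2 * π * β) ^ (-2 : ℝ) = ((2 * π * β) ^ 2)⁻¹ := by
    rw [Real.rpow_neg hβp.le, show ((2:ℝ)) = ((2:ℕ):ℝ) by norm_num, Real.rpow_natCast]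
  rw [h1]
  have hne : 1 - (β / α - 1) ^ 2 = β * (2 * α - β) / α ^ 2 := by
    field_simp
    ring
  rw [hne, inv_div]
  have h2ne : 2 * α - β ≠ 0 := by linarith
  have hαne : α ≠ 0 := hα.ne'
  have hβne : β ≠ 0 := hβ.ne'
  have hπne : π ≠ 0 := Real.pi_ne_zero
  field_simp


variable {n : ℕ} {α β : ℝ}

lemma cs_bound (hα : 0 < α) (hβ : 0 < β) (h2 : β < 2 * α) :
    ∫ x : EuclideanSpace ℝ (Fin n), |gaussDensity n α x - gaussDensity n β x|
      ≤ Real.sqrt (((1 - (β / α - 1) ^ 2)⁻¹) ^ ((n : ℝ) / 2) - 1) := by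
  set f : EuclideanSpace ℝ (Fin n) → ℝ :=
    fun x => |gaussDensity n α x - gaussDensity n β x| / Real.sqrt (gaussDensity n α x) with hfdef
  set g : EuclideanSpace ℝ (Fin n) → ℝ :=
    fun x => Real.sqrt (gaussDensity n α x) with hgdef
  have hgpos : ∀ x, 0 < gaussDensity n α x := gd_pos hα
  have hsqrtpos : ∀ x, 0 < Real.sqrt (gaussDensity n α x) :=
    fun x => Real.sqrt_pos.mpr (hgpos x)
  have hsq : ∀ x, g x ^ 2 = gaussDensity n α x := fun x => Real.sq_sqrt (hgpos x).le
  have hf2 : ∀ x, f x ^ 2 = gaussDensity n α x - 2 * gaussDensity n β x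
      + gaussDensity n β x ^ 2 / gaussDensity n α x := by
    intro x
    have hne := (hgpos x).ne'
    rw [hfdef]
    simp only
    rw [div_pow, sq_abs, Real.sq_sqrt (hgpos x).le]
    field_simp
    ring
  have hIf2 : Integrable (fun x => f x ^ 2) := by
    refine (((gd_integrable hα).sub ((gd_integrable hβ).const_mul 2)).add
      (ratio_integrable hα hβ h2)).congr ?_
    filter_upwards with x
    exact (hf2 x).symm
  have hcontα := gd_continuous (n := n) α
  have hcontβ := gd_continuous (n := n) β
  have hcf : Continuous f :=
    ((hcontα.sub hcontβ).abs).div hcontα.sqrt (fun x => (hsqrtpos x).ne')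
  have hcg : Continuous g := hcontα.sqrt
  have hof2 : ENNReal.ofReal (2:ℝ) = 2 := by norm_num
  have hmf : MemLp f (ENNReal.ofReal (2:ℝ)) volume := by
    rw [hof2]
    exact (memLp_two_iff_integrable_sq hcf.aestronglyMeasurable).mpr hIf2
  have hmg : MemLp g (ENNReal.ofReal (2:ℝ)) volume := by
    rw [hof2]
    refine (memLp_two_iff_integrable_sq hcg.aestronglyMeasurable).mpr ?_
    refine (gd_integrable hα).congr ?_
    filter_upwards with x
    exact (hsq x).symm
  have hpq : (2:ℝ).HolderConjugate 2 := by
    constructor <;> norm_num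
  have hCS := integral_mul_le_Lp_mul_Lq_of_nonneg hpq
    (Eventually.of_forall fun x => by positivity)
    (Eventually.of_forall fun x => Real.sqrt_nonneg _) hmf hmg
  have hlhs : ∫ x, f x * g x = ∫ x : EuclideanSpace ℝ (Fin n),
      |gaussDensity n α x - gaussDensity n β x| := by
    refine integral_congr_ae (Eventually.of_forall fun x => ?_)
    exact div_mul_cancel₀ _ (hsqrtpos x).ne'
  have hfint : ∫ x, f x ^ (2:ℝ) = ((1 - (β / α - 1) ^ 2)⁻¹) ^ ((n : ℝ) / 2) - 1 := by
    simp_rw [Real.rpow_two]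
    rw [integral_congr_ae (Eventually.of_forall hf2)]
    have hI1 : Integrable (fun x : EuclideanSpace ℝ (Fin n) =>
        gaussDensity n α x - 2 * gaussDensity n β x) :=
      (gd_integrable hα).sub ((gd_integrable hβ).const_mul 2)
    have hI1a : Integrable (fun x : EuclideanSpace ℝ (Fin n) => gaussDensity n α x) :=
      gd_integrable hα
    have hI1b : Integrable (fun x : EuclideanSpace ℝ (Fin n) => 2 * gaussDensity n β x) :=
      (gd_integrable hβ).const_mul 2
    rw [integral_add hI1 (ratio_integrable hα hβ h2), integral_sub hI1a hI1b,
      integral_const_mul, gd_integral hα, gd_integral hβ, ratio_integral hα hβ h2]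
    ring
  have hgint : ∫ x, g x ^ (2:ℝ) = 1 := by
    simp_rw [Real.rpow_two]
    rw [integral_congr_ae (Eventually.of_forall hsq), gd_integral hα]
  rw [hlhs, hfint, hgint, Real.one_rpow, mul_one, ← Real.sqrt_eq_rpow] at hCS
  exact hCS
end GaussAux

open GaussAux

/-- Klartag, Lemma 4.8: the `L¹`-distance of two centered gaussian densities on ℝⁿ with
covariances `α·Id` and `β·Id` is at most `C √n |β/α − 1|`. -/
theorem gaussian_L1_distance :
    ∃ C : ℝ, 0 < C ∧
      ∀ (n : ℕ), 1 ≤ n → ∀ α β : ℝ, 0 < α → 0 < β →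
        ∫ x : EuclideanSpace ℝ (Fin n), |gaussDensity n α x - gaussDensity n β x| ≤
          C * Real.sqrt n * |β / α - 1| := by
  refine ⟨3, by norm_num, ?_⟩
  intro n hn α β hα hβ
  have hn1 : (1 : ℝ) ≤ (n : ℝ) := by exact_mod_cast hn
  set s : ℝ := β / α - 1 with hs
  clear_value s
  have habs : Real.sqrt n * |s| = Real.sqrt ((n : ℝ) * s ^ 2) := by
    rw [Real.sqrt_mul (by positivity), Real.sqrt_sq_eq_abs]
  by_cases hcase : (n : ℝ) * s ^ 2 < 1 / 2
  · -- small perturbation: use the Cauchy–Schwarz / chi-square bound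
    have hs2 : s ^ 2 < 1 / 2 := by nlinarith [sq_nonneg s]
    have h1u : (0 : ℝ) < 1 - s ^ 2 := by linarith
    have hβ2 : β < 2 * α := by
      have hslt : s < 1 := by nlinarith
      have h' : β / α - 1 < 1 := by rw [← hs]; exact hslt
      have : β / α < 2 := by linarith
      have := (div_lt_iff₀ hα).mp this
      linarith
    refine le_trans (cs_bound hα hβ hβ2) ?_
    rw [← hs]
    set x : ℝ := (n : ℝ) * s ^ 2 with hxdef
    have hxnn : (0 : ℝ) ≤ x := by positivity
    have hxlt : x < 1 / 2 := hcase
    have hbase : (1 - s ^ 2)⁻¹ ≤ Real.exp (2 * s ^ 2) := by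
      have h2 : (1 - s ^ 2)⁻¹ ≤ 1 + 2 * s ^ 2 := by
        rw [inv_eq_one_div, div_le_iff₀ h1u]
        nlinarith [sq_nonneg s]
      have h3 := Real.add_one_le_exp (2 * s ^ 2)
      linarith
    have hK : ((1 - s ^ 2)⁻¹) ^ ((n : ℝ) / 2) ≤ Real.exp x := by
      calc ((1 - s ^ 2)⁻¹) ^ ((n : ℝ) / 2)
          ≤ (Real.exp (2 * s ^ 2)) ^ ((n : ℝ) / 2) :=
            Real.rpow_le_rpow (by positivity) hbase (by positivity)
        _ = Real.exp x := by rw [← Real.exp_mul]; congr 1; rw [hxdef]; ring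
    have hexp : Real.exp x ≤ 1 + 2 * x := by
      have h1x : (0 : ℝ) < 1 - x := by linarith
      have h4 : 1 - x ≤ Real.exp (-x) := by linarith [Real.add_one_le_exp (-x)]
      have h3 : Real.exp x * (1 - x) ≤ 1 := by
        have h5 := mul_le_mul_of_nonneg_left h4 (Real.exp_pos x).le
        rwa [← Real.exp_add, add_neg_cancel, Real.exp_zero] at h5
      nlinarith [Real.exp_pos x]
    calc Real.sqrt (((1 - s ^ 2)⁻¹) ^ ((n : ℝ) / 2) - 1)
        ≤ Real.sqrt (9 * x) := Real.sqrt_le_sqrt (by nlinarith)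
      _ = 3 * Real.sqrt x := by
          rw [show (9 : ℝ) = 3 ^ 2 by norm_num, Real.sqrt_mul (by positivity),
            Real.sqrt_sq (by norm_num : (0:ℝ) ≤ 3)]
      _ = 3 * Real.sqrt (n : ℝ) * |s| := by rw [hxdef, ← habs]; ring
  · -- large perturbation: trivial bound by 2
    push_neg at hcase
    have htriv : ∫ x : EuclideanSpace ℝ (Fin n), |gaussDensity n α x - gaussDensity n β x|
        ≤ 2 := by
      have hint : Integrable
          (fun x : EuclideanSpace ℝ (Fin n) => |gaussDensity n α x - gaussDensity n β x|) :=
        ((gd_integrable hα).sub (gd_integrable hβ)).abs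
      have hsum : Integrable
          (fun x : EuclideanSpace ℝ (Fin n) => gaussDensity n α x + gaussDensity n β x) :=
        (gd_integrable hα).add (gd_integrable hβ)
      have hmono := integral_mono hint hsum (fun x => by
        have h1 := gd_pos hα x
        have h2 := gd_pos hβ x
        calc |gaussDensity n α x - gaussDensity n β x|
            ≤ |gaussDensity n α x| + |gaussDensity n β x| := abs_sub _ _
          _ = gaussDensity n α x + gaussDensity n β x := by
              rw [abs_of_pos h1, abs_of_pos h2])
      rw [integral_add (gd_integrable hα) (gd_integrable hβ), gd_integral hα,
        gd_integral hβ] at hmono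
      linarith
    refine htriv.trans ?_
    have h23 : (2 : ℝ) / 3 ≤ Real.sqrt ((n : ℝ) * s ^ 2) := by
      rw [show (2 : ℝ) / 3 = Real.sqrt ((2 / 3) ^ 2) from
        (Real.sqrt_sq (by norm_num)).symm]
      apply Real.sqrt_le_sqrt
      nlinarith
    calc (2 : ℝ) = 3 * (2 / 3) := by norm_num
      _ ≤ 3 * Real.sqrt ((n : ℝ) * s ^ 2) := by linarith
      _ = 3 * Real.sqrt (n : ℝ) * |s| := by rw [← habs]; ring
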